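/- Nonlinear payment vs. utility bound: let C : ℝ → ℝ satisfy α*x ≤ C(x) ≤ β*x for x ≥ 0 and β*x ≤ C(x) ≤ α*x for x ≤ 0 (with 0 < α ≤ β). Suppose participants i ∈ Fin n have allocated values Vᵢ ≥ 0, gross payments matrices p̂ᵢᵗ ≥ 0 and rebates r̂ᵢᵗ ≥ 0 with ∑ᵢ∑ₜ p̂ᵢᵗ = ∑ᵢ∑ₜ r̂ᵢᵗ (budget balance), and no-overbidding: ∑ₜ C(p̂ᵢᵗ) ≤ Vᵢ for each i. Define each participant's utility uᵢ = Vᵢ − ∑ₜ C(p̂ᵢᵗ) − ∑ₜ C(−r̂ᵢᵗ). Then ∑ᵢ∑ₜ p̂ᵢᵗ ≤ (1/α) * ∑ᵢ uᵢ. -/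
import Mathlib

theorem nonlinear_payment_vs_utility (n : ℕ) (α β : ℝ)
    (hα : 0 < α) (hαβ : α ≤ β)
    (C : ℝ → ℝ)
    (hCpos : ∀ x : ℝ, 0 ≤ x → α * x ≤ C x ∧ C x ≤ β * x)
    (hCneg : ∀ x : ℝ, x ≤ 0 → β * x ≤ C x ∧ C x ≤ α * x)
    (V : Fin n → ℝ) (hV : ∀ i, 0 ≤ V i)
    (phat rhat : Fin n → Fin n → ℝ)
    (hphat : ∀ i t, 0 ≤ phat i t) (hrhat : ∀ i t, 0 ≤ rhat i t)
    (hbb : ∑ i, ∑ t, phat i t = ∑ i, ∑ t, rhat i t)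
    (hnob : ∀ i, ∑ t, C (phat i t) ≤ V i)
    (u : Fin n → ℝ)
    (hu : ∀ i, u i = V i - ∑ t, C (phat i t) - ∑ t, C (-(rhat i t))) :
    ∑ i, ∑ t, phat i t ≤ (1 / α) * ∑ i, u i := by
  have key : α * ∑ i, ∑ t, phat i t ≤ ∑ i, u i := by
    rw [hbb, Finset.mul_sum]
    apply Finset.sum_le_sum
    intro i _
    rw [hu i]
    have h1 : 0 ≤ V i - ∑ t, C (phat i t) := sub_nonneg.mpr (hnob i)
    have h2 : α * ∑ t, rhat i t ≤ - ∑ t, C (-(rhat i t)) := by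
      rw [Finset.mul_sum, ← Finset.sum_neg_distrib]
      apply Finset.sum_le_sum
      intro t _
      have := (hCneg (-(rhat i t)) (by linarith [hrhat i t])).2
      nlinarith
    linarith
  rw [one_div, inv_mul_eq_div]
  exact (le_div_iff₀' hα).mpr key
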